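/- Let d ≥ 3, let q be a scalar with q ≠ 0, and suppose θ_i = η + μq^i + hq^{d−i}, θ*_i = η* + μ*q^i + h*q^{d−i} for 0 ≤ i ≤ d, and φ_i = (q^i − 1)(q^{d−i+1} − 1)(τ − μμ*q^{i−1} − hh*q^{d−i}), ϕ_i = (q^i − 1)(q^{d−i+1} − 1)(τ − hμ*q^{i−1} − μh*q^{d−i}) for 1 ≤ i ≤ d. Assume the θ_i are pairwise distinct, the θ*_i are pairwise distinct, and all φ_i, ϕ_i are nonzero. Define a_0 = θ_0 + φ_1/(θ*_0 − θ*_1), a_d = θ_d + φ_d/(θ*_d − θ*_{d−1}), and H = (a_0 − a_d)(θ*_0 − θ*_1)(θ*_{d−1} − θ*_d)/(θ*_0 − θ*_d). Then H = (q−1)^2((q^{d−1}+1)τ − q^{d−1}(h+μ)(h*+μ*)). -/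

import Mathlib

theorem stmt_8 {K : Type*} [Field K] (d : ℕ) (hd : 3 ≤ d)
    (η μ h ηs μs hs τ q : K) (hq : q ≠ 0)
    (θ θs φ ϕ : ℕ → K)
    (hθ : ∀ i, i ≤ d → θ i = η + μ * q ^ i + h * q ^ (d - i))
    (hθs : ∀ i, i ≤ d → θs i = ηs + μs * q ^ i + hs * q ^ (d - i))
    (hφ : ∀ i, 1 ≤ i → i ≤ d →
      φ i = (q ^ i - 1) * (q ^ (d - i + 1) - 1) * (τ - μ * μs * q ^ (i - 1) - h * hs * q ^ (d - i)))
    (hϕ : ∀ i, 1 ≤ i → i ≤ d →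
      ϕ i = (q ^ i - 1) * (q ^ (d - i + 1) - 1) * (τ - h * μs * q ^ (i - 1) - μ * hs * q ^ (d - i)))
    (hθinj : ∀ i j, i ≤ d → j ≤ d → i ≠ j → θ i ≠ θ j)
    (hθsinj : ∀ i j, i ≤ d → j ≤ d → i ≠ j → θs i ≠ θs j)
    (hφne : ∀ i, 1 ≤ i → i ≤ d → φ i ≠ 0)
    (hϕne : ∀ i, 1 ≤ i → i ≤ d → ϕ i ≠ 0) :
    ((θ 0 + φ 1 / (θs 0 - θs 1)) - (θ d + φ d / (θs d - θs (d - 1))))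
        * (θs 0 - θs 1) * (θs (d - 1) - θs d) / (θs 0 - θs d)
      = (q - 1) ^ 2 * ((q ^ (d - 1) + 1) * τ - q ^ (d - 1) * (h + μ) * (hs + μs)) := by
  have h1 : (1:ℕ) ≤ d := by omega
  have hdd : d - 1 + 1 = d := by omega
  have hd1 : d - (d - 1) = 1 := by omega
  have hd0 : d - d = 0 := by omega
  have epow : q ^ d = q ^ (d - 1) * q := by
    conv_lhs => rw [← hdd]
    rw [pow_succ]
  have hA : θs 0 - θs 1 ≠ 0 := sub_ne_zero.mpr (hθsinj 0 1 (by omega) (by omega) (by omega))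
  have hB : θs d - θs (d - 1) ≠ 0 :=
    sub_ne_zero.mpr (hθsinj d (d - 1) le_rfl (by omega) (by omega))
  have hC : θs 0 - θs d ≠ 0 := sub_ne_zero.mpr (hθsinj 0 d (by omega) le_rfl (by omega))
  have e1 : θ 0 = η + μ + h * (q ^ (d - 1) * q) := by
    rw [hθ 0 (by omega)]; simp only [Nat.sub_zero, pow_zero, mul_one, epow]
  have e2 : θ d = η + μ * (q ^ (d - 1) * q) + h := by
    rw [hθ d le_rfl, hd0]; simp only [pow_zero, mul_one, epow]
  have e3 : θs 0 = ηs + μs + hs * (q ^ (d - 1) * q) := by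
    rw [hθs 0 (by omega)]; simp only [Nat.sub_zero, pow_zero, mul_one, epow]
  have e4 : θs 1 = ηs + μs * q + hs * q ^ (d - 1) := by
    rw [hθs 1 h1, pow_one]
  have e5 : θs (d - 1) = ηs + μs * q ^ (d - 1) + hs * q := by
    rw [hθs (d - 1) (by omega), hd1, pow_one]
  have e6 : θs d = ηs + μs * (q ^ (d - 1) * q) + hs := by
    rw [hθs d le_rfl, hd0]; simp only [pow_zero, mul_one, epow]
  have e7 : φ 1 = (q - 1) * (q ^ (d - 1) * q - 1) * (τ - μ * μs - h * hs * q ^ (d - 1)) := by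
    rw [hφ 1 le_rfl h1, hdd]; simp only [pow_one, Nat.sub_self, pow_zero, mul_one, epow]
  have e8 : φ d = (q ^ (d - 1) * q - 1) * (q - 1) * (τ - μ * μs * q ^ (d - 1) - h * hs) := by
    rw [hφ d h1 le_rfl, hd0]; simp only [zero_add, pow_one, pow_zero, mul_one, epow]
  rw [e3, e4] at hA
  rw [e5, e6] at hB
  rw [e3, e6] at hC
  rw [e1, e2, e3, e4, e5, e6, e7, e8]
  generalize q ^ (d - 1) = a at hA hB hC ⊢
  generalize hx : ηs + μs + hs * (a * q) - (ηs + μs * q + hs * a) = x at hA ⊢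
  generalize hy : ηs + μs * (a * q) + hs - (ηs + μs * a + hs * q) = y at hB ⊢
  generalize hz : ηs + μs + hs * (a * q) - (ηs + μs * (a * q) + hs) = z at hC ⊢
  field_simp
  subst hx hy hz
  ring
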